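/- Let k > 3 be odd, let zzc(k) be the word obtained from zz(k−1, k−1) by replacing its last two letters (which are 2, 1) by k, k−1, and let γ be the permutation obtained from zzc(k) by breaking ties. Then γ circularly contains the permutation σ = (1, k−1, k−2, …, 3, 2, k), i.e., the unique permutation of length k with σ_1 = 1, σ_i = k+1−i for 2 ≤ i ≤ k−1, and σ_k = k. -/

import Mathlib

/-- The `j`-th run of the zigzag word over alphabet `{1, …, q}`: for odd `j` the odd
numbers in increasing order, for even `j` the even numbers in decreasing order. -/
def zrun (j q : ℕ) : List ℕ :=
  if j % 2 = 1 then (List.range (q + 1)).filter (fun n => n % 2 = 1)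
  else ((List.range (q + 1)).filter (fun n => n % 2 = 0 && n != 0)).reverse

/-- The zigzag word `zz(m, q) = R₁ R₂ ⋯ R_m`. -/
def zz (m q : ℕ) : List ℕ := ((List.range m).map fun j => zrun (j + 1) q).flatten

/-- `zzc(k)`: the zigzag word `zz(k-1, k-1)` (with a trailing `1` appended) whose final
two letters `2, 1` are replaced by `k, k-1`; equivalently, drop the last letter of
`zz(k-1,k-1)` and append `k, k-1`.  E.g. `zzc 5 = [1,3,4,2,1,3,4,5,4]`. -/
def zzc (k : ℕ) : List ℕ := (zz (k - 1) (k - 1)).dropLast ++ [k, k - 1]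

/-- The permutation obtained from the word `ω` by breaking ties: position `i` receives
the rank (starting from 1) of the pair `(ω_i, −i)` in lexicographic order, i.e. the
number of positions `j` with `ω_j < ω_i`, or `ω_j = ω_i` and `j ≥ i`. -/
def breakTies (ω : List ℕ) : List ℕ :=
  ω.mapIdx fun i x =>
    ((ω.mapIdx fun j y => (j, y)).filter fun p => p.2 < x || (p.2 = x && i ≤ p.1)).length

/-- `l` is the one-line notation of a permutation of `{1, …, n}`. -/
def IsPermList (n : ℕ) (l : List ℕ) : Prop := l.Perm ((List.range n).map (· + 1))

/-- The pattern `σ` occurs as an order-isomorphic subsequence of the word `w`: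
there are indices `i₁ < ⋯ < i_k` with `w (i_p) < w (i_q)` exactly when `σ p < σ q`. -/
def OrderIsoContains (w σ : List ℕ) : Prop :=
  ∃ f : Fin σ.length → Fin w.length, StrictMono f ∧
    ∀ p q : Fin σ.length, w.get (f p) < w.get (f q) ↔ σ.get p < σ.get q

/-! ### Auxiliary lemmas about `breakTies` -/

lemma mapIdx_eq_map_range (l : List ℕ) {β : Type} (f : ℕ → ℕ → β) :
    l.mapIdx f = (List.range l.length).map fun i => f i (l.getD i 0) := by
  apply List.ext_getElem (by simp)
  intro i h1 h2
  have : i < l.length := by simpa using h1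
  simp [List.getD_eq_getElem?_getD, List.getElem?_eq_getElem this]

lemma countP_range_eq_card (n : ℕ) (p : ℕ → Bool) :
    (List.range n).countP p = ((Finset.range n).filter (fun j => p j = true)).card := by
  induction n with
  | zero => rfl
  | succ m ih =>
    rw [List.range_succ, Finset.range_add_one, List.countP_append, Finset.filter_insert]
    by_cases h : p m = true
    · rw [if_pos h, Finset.card_insert_of_notMem (by simp)]
      simp [h, ih, List.countP_cons]
    · rw [if_neg h]
      simp [h, ih, List.countP_cons]

lemma breakTies_length (ω : List ℕ) : (breakTies ω).length = ω.length := by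
  simp [breakTies]

lemma filter_pairs_length (ω : List ℕ) (i x : ℕ) :
    ((ω.mapIdx fun j y => (j, y)).filter fun p => p.2 < x || (p.2 = x && i ≤ p.1)).length
    = ((Finset.range ω.length).filter
        (fun j => ω.getD j 0 < x ∨ (ω.getD j 0 = x ∧ i ≤ j))).card := by
  rw [mapIdx_eq_map_range, List.filter_map, List.length_map,
      ← List.countP_eq_length_filter, countP_range_eq_card]
  refine congrArg Finset.card (Finset.filter_congr ?_)
  intro j _
  simp [Function.comp]

lemma bt_get (ω : List ℕ) (i : ℕ) (hi : i < (breakTies ω).length) :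
    (breakTies ω)[i] = ((Finset.range ω.length).filter
      (fun j => ω.getD j 0 < ω.getD i 0 ∨ (ω.getD j 0 = ω.getD i 0 ∧ i ≤ j))).card := by
  have hi' : i < ω.length := by simpa [breakTies_length] using hi
  simp only [breakTies, List.getElem_mapIdx]
  rw [filter_pairs_length, List.getD_eq_getElem ω 0 hi']

lemma bt_key1 {ω : List ℕ} {i j : ℕ} (hi : i < ω.length) (hj : j < ω.length)
    (h : ω.getD i 0 < ω.getD j 0) :
    (breakTies ω)[i]'(by rw [breakTies_length]; exact hi) <
    (breakTies ω)[j]'(by rw [breakTies_length]; exact hj) := by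
  rw [bt_get, bt_get]
  apply Finset.card_lt_card
  constructor
  · intro m hm
    simp only [Finset.mem_filter, Finset.mem_range] at hm ⊢
    exact ⟨hm.1, by omega⟩
  · intro hsub
    have hjj : j ∈ (Finset.range ω.length).filter
      (fun m => ω.getD m 0 < ω.getD j 0 ∨ (ω.getD m 0 = ω.getD j 0 ∧ j ≤ m)) := by
      simp [Finset.mem_filter, hj]
    have := hsub hjj
    simp only [Finset.mem_filter, Finset.mem_range] at this
    omega

lemma bt_key2 {ω : List ℕ} {i j : ℕ} (hi : i < ω.length) (hj : j < ω.length)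
    (h : ω.getD i 0 = ω.getD j 0) (hij : i < j) :
    (breakTies ω)[j]'(by rw [breakTies_length]; exact hj) <
    (breakTies ω)[i]'(by rw [breakTies_length]; exact hi) := by
  rw [bt_get, bt_get]
  apply Finset.card_lt_card
  constructor
  · intro m hm
    simp only [Finset.mem_filter, Finset.mem_range] at hm ⊢
    exact ⟨hm.1, by omega⟩
  · intro hsub
    have hii : i ∈ (Finset.range ω.length).filter
      (fun m => ω.getD m 0 < ω.getD i 0 ∨ (ω.getD m 0 = ω.getD i 0 ∧ i ≤ m)) := by
      simp [Finset.mem_filter, hi]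
    have := hsub hii
    simp only [Finset.mem_filter, Finset.mem_range] at this
    omega

lemma bt_lt_iff (ω : List ℕ) (i j : ℕ) (hi : i < ω.length) (hj : j < ω.length) :
    ((breakTies ω)[i]'(by rw [breakTies_length]; exact hi) <
     (breakTies ω)[j]'(by rw [breakTies_length]; exact hj)) ↔
    (ω.getD i 0 < ω.getD j 0 ∨ (ω.getD i 0 = ω.getD j 0 ∧ j < i)) := by
  rcases lt_trichotomy (ω.getD i 0) (ω.getD j 0) with h | h | h
  · simp only [bt_key1 hi hj h, true_iff]
    left; exact h
  · rcases lt_trichotomy i j with hij | hij | hij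
    · have := bt_key2 hi hj h hij
      constructor
      · intro hlt; omega
      · intro hr; omega
    · subst hij
      constructor
      · intro hlt; exact absurd hlt (lt_irrefl _)
      · intro hr; omega
    · have := bt_key2 hj hi h.symm hij
      constructor
      · intro _; right; exact ⟨h, hij⟩
      · intro _; exact this
  · have := bt_key1 hj hi h
    constructor
    · intro hlt; omega
    · intro hr; omega

/-! ### Structure of the zigzag word -/

def zB (h : ℕ) : List ℕ :=
  (List.range h).map (fun t => 2*t+1) ++ ((List.range h).map (fun t => 2*t+2)).reverse

lemma filter_odd_range (h : ℕ) :
    (List.range (2*h + 1)).filter (fun n => decide (n % 2 = 1)) =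
      (List.range h).map (fun t => 2*t+1) := by
  induction h with
  | zero => rfl
  | succ m ih =>
    have h2 : 2*(m+1) + 1 = (2*m+1) + 1 + 1 := by ring
    rw [h2, List.range_succ, List.range_succ, List.filter_append, List.filter_append, ih,
        List.range_succ, List.map_append]
    simp [Nat.add_mod, Nat.mul_mod]

lemma filter_even_range (h : ℕ) :
    (List.range (2*h + 1)).filter (fun n => (decide (n % 2 = 0) && (n != 0))) =
      (List.range h).map (fun t => 2*t+2) := by
  induction h with
  | zero => rfl
  | succ m ih =>
    have h2 : 2*(m+1) + 1 = (2*m+1) + 1 + 1 := by ring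
    rw [h2, List.range_succ, List.range_succ, List.filter_append, List.filter_append, ih,
        List.range_succ, List.map_append]
    simp [Nat.add_mod, Nat.mul_mod]

lemma zrun_odd (j h : ℕ) (hj : j % 2 = 1) :
    zrun j (2*h) = (List.range h).map (fun t => 2*t+1) := by
  rw [zrun, if_pos hj]
  exact filter_odd_range h

lemma zrun_even (j h : ℕ) (hj : j % 2 = 0) :
    zrun j (2*h) = ((List.range h).map (fun t => 2*t+2)).reverse := by
  rw [zrun, if_neg (by omega)]
  rw [filter_even_range h]

lemma zz_eq_replicate (h m : ℕ) :
    zz (2*m) (2*h) = (List.replicate m (zB h)).flatten := by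
  induction m with
  | zero => rfl
  | succ n ih =>
    have h2 : 2*(n+1) = (2*n) + 1 + 1 := by ring
    rw [zz, h2, List.range_succ, List.range_succ]
    simp only [List.map_append, List.flatten_append, List.map_cons, List.map_nil,
      List.flatten_cons, List.flatten_nil, List.append_nil]
    rw [List.replicate_succ', List.flatten_append, List.append_assoc]
    congr 1
    rw [zrun_odd (2*n+1) h (by omega), zrun_even (2*n+1+1) h (by omega)]
    simp [zB]

lemma zB_length (h : ℕ) : (zB h).length = 2*h := by
  simp [zB]; ring

lemma flatten_replicate_length {α : Type} (n : ℕ) (l : List α) :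
    ((List.replicate n l).flatten).length = n * l.length := by
  induction n with
  | zero => simp
  | succ m ih => rw [List.replicate_succ, List.flatten_cons, List.length_append, ih]; ring

lemma flatten_replicate_getD (b : ℕ) : ∀ (n : ℕ) (l : List ℕ) (u : ℕ)
    (_ : b < n) (_ : u < l.length),
    ((List.replicate n l).flatten).getD (b * l.length + u) 0 = l.getD u 0 := by
  induction b with
  | zero =>
    intro n l u hb hu
    match n, hb with
    | n+1, _ =>
      rw [List.replicate_succ, List.flatten_cons]
      rw [List.getD_append _ _ _ _ (by simpa using hu)]
      simp
  | succ c ih =>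
    intro n l u hb hu
    match n, hb with
    | n+1, hb =>
      rw [List.replicate_succ, List.flatten_cons]
      rw [List.getD_append_right _ _ _ _ (by nlinarith)]
      have heq : (c+1) * l.length + u - l.length = c * l.length + u := by
        have : (c+1) * l.length = c * l.length + l.length := by ring
        omega
      rw [heq]
      exact ih n l u (by omega) hu

lemma zB_getD_left (h u : ℕ) (hu : u < h) :
    (zB h).getD u 0 = 2*u+1 := by
  rw [zB, List.getD_append _ _ _ _ (by simpa using hu)]
  rw [List.getD_eq_getElem _ _ (by simpa using hu)]
  simp

lemma zB_getD_right (h u : ℕ) (hu1 : h ≤ u) (hu : u < 2*h) :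
    (zB h).getD u 0 = 4*h - 2*u := by
  rw [zB, List.getD_append_right _ _ _ _ (by simpa using hu1)]
  simp only [List.length_map, List.length_range]
  rw [List.getD_eq_getElem _ _ (by simp; omega)]
  rw [List.getElem_reverse]
  simp only [List.getElem_map, List.getElem_range, List.length_map, List.length_range]
  omega

lemma zzc_length (h : ℕ) (hh : 1 ≤ h) : (zzc (2*h+1)).length = 2*h*h + 1 := by
  rw [zzc]
  have e1 : 2*h+1-1 = 2*h := by omega
  rw [e1, zz_eq_replicate h h]
  rw [List.length_append, List.length_dropLast, flatten_replicate_length, zB_length]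
  have h3 : 2*h*h = h * (2*h) := by ring
  have h4 : 1 ≤ h * (2*h) := by nlinarith
  rw [h3]
  simp only [List.length_cons, List.length_nil]
  generalize h * (2*h) = A at h4 ⊢
  omega

lemma zzc_getD (h b u : ℕ) (hh : 2 ≤ h) (hb : b < h) (hu : u < 2*h)
    (hlt : b * (2*h) + u < h*(2*h) - 1) :
    (zzc (2*h+1)).getD (b*(2*h)+u) 0 = (zB h).getD u 0 := by
  rw [zzc]
  have e1 : 2*h+1-1 = 2*h := by omega
  rw [e1, zz_eq_replicate h h]
  have hlen : ((List.replicate h (zB h)).flatten).dropLast.length = h*(2*h) - 1 := by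
    rw [List.length_dropLast, flatten_replicate_length, zB_length]
  rw [List.getD_append _ _ _ _ (by rw [hlen]; omega)]
  rw [List.getD_eq_getElem _ _ (by rw [hlen]; omega)]
  rw [List.getElem_dropLast]
  rw [← List.getD_eq_getElem _ _ ]
  rw [← zB_length h]
  exact flatten_replicate_getD b h (zB h) u hb (by rw [zB_length]; omega)

/-! ### The rotated pattern -/

def pbase (k : ℕ) : List ℕ := 1 :: (((List.range (k - 2)).reverse.map (· + 2)) ++ [k])

lemma pbase_length (k : ℕ) (hk : 2 ≤ k) : (pbase k).length = k := by
  simp [pbase]; omega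

lemma pbase_getElem (k t : ℕ) (hk : 2 ≤ k) (ht : t < k) (ht' : t < (pbase k).length) :
    (pbase k)[t] = if t = 0 then 1 else if t < k-1 then k-t else k := by
  rcases Nat.eq_zero_or_pos t with rfl | htpos
  · simp [pbase]
  · rw [if_neg (by omega)]
    obtain ⟨s, rfl⟩ : ∃ s, t = s + 1 := ⟨t - 1, by omega⟩
    rw [List.getElem_of_eq
      (show pbase k = 1 :: (((List.range (k - 2)).reverse.map (· + 2)) ++ [k]) from rfl) ht']
    rw [List.getElem_cons_succ]
    by_cases hs : s < k - 2
    · rw [List.getElem_append_left (by simpa using hs)]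
      rw [if_pos (by omega)]
      simp only [List.getElem_map, List.getElem_reverse, List.length_range, List.getElem_range]
      omega
    · rw [List.getElem_append_right (by simpa using hs)]
      rw [if_neg (by omega)]
      simp only [List.length_map, List.length_reverse, List.length_range]
      have h0 : s - (k-2) = 0 := by omega
      simp [h0]

lemma rot2_length (k : ℕ) (hk : 2 ≤ k) : ((pbase k).rotate 2).length = k := by
  rw [List.length_rotate, pbase_length k hk]

lemma rot2_getElem (k p : ℕ) (hk : 4 ≤ k) (hp : p < k) (hp' : p < ((pbase k).rotate 2).length) :
    ((pbase k).rotate 2)[p] =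
      if p < k-3 then k-2-p else if p = k-3 then k else if p = k-2 then 1 else k-1 := by
  have hlen := pbase_length k (by omega)
  have hrot : (pbase k).rotate 2 = (pbase k).drop 2 ++ (pbase k).take 2 :=
    List.rotate_eq_drop_append_take (by omega)
  rw [List.getElem_of_eq hrot]
  rw [hrot] at hp'
  have hdl : ((pbase k).drop 2).length = k - 2 := by rw [List.length_drop, hlen]
  by_cases hcase : p < k - 2
  · rw [List.getElem_append_left (by omega)]
    rw [List.getElem_drop]
    rw [pbase_getElem k (2+p) (by omega) (by omega)]
    split_ifs <;> omega
  · rw [List.getElem_append_right (by omega)]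
    rw [List.getElem_take]
    rw [pbase_getElem k (p - ((pbase k).drop 2).length) (by omega) (by omega)]
    split_ifs <;> omega

/-! ### The witness indices and values -/

def Fidx (h p : ℕ) : ℕ :=
  if p = 0 then h-1 else if p < h then h+p else if p < 2*h-2 then (p-h+1)*(2*h)
  else if p = 2*h-2 then (h-2)*(2*h)+h else if p = 2*h-1 then (h-1)*(2*h) else (h-1)*(2*h)+h

def Vval (h p : ℕ) : ℕ :=
  if p = 0 then 2*h-1 else if p < h then 2*h-2*p else if p < 2*h-2 then 1
  else if p = 2*h-2 then 2*h else if p = 2*h-1 then 1 else 2*h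

def Pval (h p : ℕ) : ℕ :=
  if p < 2*h-2 then 2*h-1-p else if p = 2*h-2 then 2*h+1 else if p = 2*h-1 then 1 else 2*h

lemma Fidx_e0 (h : ℕ) : Fidx h 0 = h-1 := by simp [Fidx]

lemma Fidx_e1 (h p : ℕ) (h1 : 1 ≤ p) (h2 : p < h) : Fidx h p = h+p := by
  unfold Fidx; rw [if_neg (by omega), if_pos h2]

lemma Fidx_e2 (h p : ℕ) (h1 : h ≤ p) (h2 : p < 2*h-2) (hh : 1 ≤ h) :
    Fidx h p = (p-h+1)*(2*h) := by
  unfold Fidx; rw [if_neg (by omega), if_neg (by omega), if_pos h2]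

lemma Fidx_e3 (h : ℕ) (hh : 3 ≤ h) : Fidx h (2*h-2) = (h-2)*(2*h)+h := by
  unfold Fidx; rw [if_neg (by omega), if_neg (by omega), if_neg (by omega), if_pos rfl]

lemma Fidx_e4 (h : ℕ) (hh : 3 ≤ h) : Fidx h (2*h-1) = (h-1)*(2*h) := by
  unfold Fidx
  rw [if_neg (by omega), if_neg (by omega), if_neg (by omega), if_neg (by omega), if_pos rfl]

lemma Fidx_e5 (h : ℕ) (hh : 3 ≤ h) : Fidx h (2*h) = (h-1)*(2*h)+h := by
  unfold Fidx
  rw [if_neg (by omega), if_neg (by omega), if_neg (by omega), if_neg (by omega),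
      if_neg (by omega)]

lemma Fidx_step (h p : ℕ) (hh : 3 ≤ h) (hp : p < 2*h) : Fidx h p < Fidx h (p+1) := by
  rcases Nat.eq_zero_or_pos p with rfl | hpos
  · rw [Fidx_e0, Fidx_e1 h 1 (by omega) (by omega)]; omega
  · by_cases c1 : p + 1 < h
    · rw [Fidx_e1 h p hpos (by omega), Fidx_e1 h (p+1) (by omega) c1]; omega
    · by_cases c2 : p < h
      · rw [Fidx_e1 h p hpos c2, Fidx_e2 h (p+1) (by omega) (by omega) (by omega)]
        have e : p+1-h+1 = 1 := by omega
        rw [e, one_mul]; omega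
      · by_cases c3 : p+1 < 2*h-2
        · rw [Fidx_e2 h p (by omega) (by omega) (by omega),
              Fidx_e2 h (p+1) (by omega) c3 (by omega)]
          have e : (p+1-h+1)*(2*h) = (p-h+1)*(2*h)+2*h := by
            have e1 : p+1-h+1 = (p-h+1)+1 := by omega
            rw [e1, Nat.succ_mul]
          omega
        · by_cases c4 : p < 2*h-2
          · rw [Fidx_e2 h p (by omega) c4 (by omega)]
            have e : p+1 = 2*h-2 := by omega
            rw [e, Fidx_e3 h hh]
            have e2 : p-h+1 = h-2 := by omega
            rw [e2]; omega
          · by_cases c5 : p = 2*h-2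
            · rw [c5]
              have e : 2*h-2+1 = 2*h-1 := by omega
              rw [e, Fidx_e3 h hh, Fidx_e4 h hh]
              have e2 : (h-1)*(2*h) = (h-2)*(2*h)+2*h := by
                have e1 : h-1 = (h-2)+1 := by omega
                rw [e1, Nat.succ_mul]
              omega
            · have c6 : p = 2*h-1 := by omega
              rw [c6]
              have e : 2*h-1+1 = 2*h := by omega
              rw [e, Fidx_e4 h hh, Fidx_e5 h hh]
              omega

lemma Fidx_mono (h : ℕ) (hh : 3 ≤ h) : ∀ p q : ℕ, q ≤ 2*h → p < q → Fidx h p < Fidx h q := by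
  intro p q
  induction q with
  | zero => omega
  | succ m ih =>
    intro hq hpq
    rcases Nat.lt_or_ge p m with hc | hc
    · exact (ih (by omega) hc).trans (Fidx_step h m hh (by omega))
    · have : p = m := by omega
      subst this
      exact Fidx_step h p hh (by omega)

lemma Fidx_lt (h p : ℕ) (hh : 3 ≤ h) (hp : p ≤ 2*h) : Fidx h p < h*(2*h) - 1 := by
  have e : (h-1)*(2*h) = h*(2*h) - 2*h := Nat.sub_one_mul h (2*h)
  have h2 : 3*(2*h) ≤ h*(2*h) := Nat.mul_le_mul_right _ hh
  rcases Nat.lt_or_ge p (2*h) with hc | hc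
  · have := Fidx_mono h hh p (2*h) (le_refl _) hc
    rw [Fidx_e5 h hh] at this
    omega
  · have hpe : p = 2*h := by omega
    rw [hpe, Fidx_e5 h hh]
    omega

lemma VP_lt (h p q : ℕ) (hh : 3 ≤ h) (hpq : p < q) (hq : q ≤ 2*h) :
    (Vval h p < Vval h q ↔ Pval h p < Pval h q) := by
  unfold Vval Pval
  split_ifs <;> omega

lemma VP_le (h p q : ℕ) (hh : 3 ≤ h) (hpq : q < p) (hp : p ≤ 2*h) :
    (Vval h p ≤ Vval h q ↔ Pval h p < Pval h q) := by
  unfold Vval Pval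
  split_ifs <;> omega

lemma zzc_val (h p : ℕ) (hh : 3 ≤ h) (hp : p ≤ 2*h) :
    (zzc (2*h+1)).getD (Fidx h p) 0 = Vval h p := by
  have h2 : 3*(2*h) ≤ h*(2*h) := Nat.mul_le_mul_right _ hh
  have e5 : (h-1)*(2*h) = h*(2*h) - 2*h := Nat.sub_one_mul h (2*h)
  have e6 : (h-2)*(2*h) = h*(2*h) - 2*(2*h) := Nat.sub_mul h 2 (2*h)
  rcases Nat.eq_zero_or_pos p with rfl | hpos
  · rw [Fidx_e0]
    have e : h-1 = 0*(2*h)+(h-1) := by omega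
    rw [e, zzc_getD h 0 (h-1) (by omega) (by omega) (by omega) (by omega)]
    rw [zB_getD_left h (h-1) (by omega)]
    unfold Vval
    rw [if_pos rfl]
    omega
  · by_cases c1 : p < h
    · rw [Fidx_e1 h p hpos c1]
      have e : h+p = 0*(2*h)+(h+p) := by omega
      rw [e, zzc_getD h 0 (h+p) (by omega) (by omega) (by omega) (by omega)]
      rw [zB_getD_right h (h+p) (by omega) (by omega)]
      unfold Vval
      rw [if_neg (by omega), if_pos c1]
      omega
    · by_cases c2 : p < 2*h-2
      · rw [Fidx_e2 h p (by omega) c2 (by omega)]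
        have hb : p-h+1 < h := by omega
        have hmul : (p-h+1)*(2*h) ≤ (h-2)*(2*h) := Nat.mul_le_mul_right _ (by omega)
        have hv : (zzc (2*h+1)).getD ((p-h+1)*(2*h)) 0 = (zB h).getD 0 0 :=
          zzc_getD h (p-h+1) 0 (by omega) hb (by omega) (by omega)
        rw [hv, zB_getD_left h 0 (by omega)]
        unfold Vval
        rw [if_neg (by omega), if_neg (by omega), if_pos c2]
      · by_cases c3 : p = 2*h-2
        · rw [c3, Fidx_e3 h hh]
          rw [zzc_getD h (h-2) h (by omega) (by omega) (by omega) (by omega)]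
          rw [zB_getD_right h h (le_refl _) (by omega)]
          unfold Vval
          rw [if_neg (by omega), if_neg (by omega), if_neg (by omega), if_pos rfl]
          omega
        · by_cases c4 : p = 2*h-1
          · rw [c4, Fidx_e4 h hh]
            have hv : (zzc (2*h+1)).getD ((h-1)*(2*h)) 0 = (zB h).getD 0 0 :=
              zzc_getD h (h-1) 0 (by omega) (by omega) (by omega) (by omega)
            rw [hv, zB_getD_left h 0 (by omega)]
            unfold Vval
            rw [if_neg (by omega), if_neg (by omega), if_neg (by omega), if_neg (by omega),
                if_pos rfl]
          · have c5 : p = 2*h := by omega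
            rw [c5, Fidx_e5 h hh]
            rw [zzc_getD h (h-1) h (by omega) (by omega) (by omega) (by omega)]
            rw [zB_getD_right h h (le_refl _) (by omega)]
            unfold Vval
            rw [if_neg (by omega), if_neg (by omega), if_neg (by omega), if_neg (by omega),
                if_neg (by omega)]
            omega

lemma P_match (h p : ℕ) (hh : 3 ≤ h) (hp : p < 2*h+1) :
    (if p < (2*h+1)-3 then (2*h+1)-2-p else if p = (2*h+1)-3 then 2*h+1
     else if p = (2*h+1)-2 then 1 else (2*h+1)-1) = Pval h p := by
  unfold Pval
  split_ifs <;> omega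

/-- For odd `k > 3`, the permutation `γ` obtained by breaking ties from `zzc(k)`
circularly contains the pattern `σ = (1, k−1, k−2, …, 3, 2, k)` (the permutation with
`σ₁ = 1`, `σᵢ = k+1−i` for `2 ≤ i ≤ k−1`, and `σ_k = k`). -/
theorem gamma_contains_layered2 (k : ℕ) (hk : 3 < k) (hodd : Odd k) :
    ∃ r < k, OrderIsoContains (breakTies (zzc k))
      ((1 :: (((List.range (k - 2)).reverse.map (· + 2)) ++ [k])).rotate r) := by
  obtain ⟨h, hkeq⟩ := hodd
  have hkeq2 : k = 2*h+1 := by omega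
  clear hkeq
  subst hkeq2
  have hh2 : 2 ≤ h := by omega
  by_cases h5 : h = 2
  · -- k = 5
    subst h5
    refine ⟨3, by omega, ?_⟩
    have e1 : ((1 :: (((List.range (2*2+1 - 2)).reverse.map (· + 2)) ++ [2*2+1])).rotate 3)
        = [2,5,1,4,3] := by decide
    have e2 : breakTies (zzc (2*2+1)) = [2,5,8,3,1,4,7,9,6] := by decide
    rw [e1, e2]
    unfold OrderIsoContains
    refine ⟨fun p => ⟨2*p.val, ?_⟩, ?_, ?_⟩
    · have hp := p.isLt
      simp only [List.length_cons, List.length_nil] at hp ⊢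
      omega
    · intro a b hab
      simp only [Fin.mk_lt_mk]
      have : a.val < b.val := hab
      omega
    · decide
  · -- k = 2h+1 with h ≥ 3
    have hh : 3 ≤ h := by omega
    have hk2 : (2 : ℕ) ≤ 2*h+1 := by omega
    have hσlen : ((pbase (2*h+1)).rotate 2).length = 2*h+1 := rot2_length (2*h+1) hk2
    have hwlen : (breakTies (zzc (2*h+1))).length = 2*h*h+1 := by
      rw [breakTies_length, zzc_length h (by omega)]
    have hprod : 2*h*h = h*(2*h) := by ring
    refine ⟨2, by omega, ?_⟩
    show OrderIsoContains (breakTies (zzc (2*h+1))) ((pbase (2*h+1)).rotate 2)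
    unfold OrderIsoContains
    have hFb : ∀ p : ℕ, p ≤ 2*h → Fidx h p < (breakTies (zzc (2*h+1))).length := by
      intro p hp
      have := Fidx_lt h p hh hp
      rw [hwlen, hprod]
      omega
    refine ⟨fun p => ⟨Fidx h p.val, hFb p.val (by have h1 := p.isLt; omega)⟩,
      ?_, ?_⟩
    · intro a b hab
      simp only [Fin.mk_lt_mk]
      exact Fidx_mono h hh a.val b.val (by have h1 := b.isLt; omega) hab
    · intro p q
      have hp : p.val ≤ 2*h := by have h1 := p.isLt; omega
      have hq : q.val ≤ 2*h := by have h1 := q.isLt; omega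
      have hip : Fidx h p.val < (zzc (2*h+1)).length := by
        have h1 := hFb p.val hp; rwa [breakTies_length] at h1
      have hiq : Fidx h q.val < (zzc (2*h+1)).length := by
        have h1 := hFb q.val hq; rwa [breakTies_length] at h1
      have key := bt_lt_iff (zzc (2*h+1)) (Fidx h p.val) (Fidx h q.val) hip hiq
      rw [zzc_val h p.val hh hp, zzc_val h q.val hh hq] at key
      have hgetp : ((pbase (2*h+1)).rotate 2).get p = Pval h p.val := by
        rw [List.get_eq_getElem, rot2_getElem (2*h+1) p.val (by omega) (by omega) p.isLt]
        exact P_match h p.val hh (by omega)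
      have hgetq : ((pbase (2*h+1)).rotate 2).get q = Pval h q.val := by
        rw [List.get_eq_getElem, rot2_getElem (2*h+1) q.val (by omega) (by omega) q.isLt]
        exact P_match h q.val hh (by omega)
      rw [hgetp, hgetq]
      simp only [List.get_eq_getElem]
      rcases lt_trichotomy p.val q.val with hc | hc | hc
      · rw [key]
        have hmono := Fidx_mono h hh p.val q.val hq hc
        have hVP := VP_lt h p.val q.val hh hc hq
        constructor
        · intro hl
          rcases hl with hl | ⟨_, hl⟩
          · exact hVP.mp hl
          · omega
        · intro hr
          left; exact hVP.mpr hr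
      · have : p = q := Fin.ext hc
        subst this
        simp
      · rw [key]
        have hmono := Fidx_mono h hh q.val p.val hp hc
        have hVP := VP_le h p.val q.val hh hc hp
        constructor
        · intro hl
          apply hVP.mp
          rcases hl with hl | ⟨hl, _⟩ <;> omega
        · intro hr
          have := hVP.mpr hr
          rcases Nat.lt_or_ge (Vval h p.val) (Vval h q.val) with hv | hv
          · left; exact hv
          · right; exact ⟨by omega, hmono⟩
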